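/- Uniqueness of the Krawtchouk linear system for odd n: let n ≥ 1 be odd and set N = (n−1)/2. (i) If real numbers q₀,…,q_N satisfy Σ_{k=0}^{N} q_k·Kⁿ_k(2m) = δ_{m,0} for every m ∈ {0,1,…,N}, then q_k = 1/2^{n−1} for all k. (ii) If real numbers r₀,…,r_N satisfy Σ_{k=0}^{N} r_k·Kⁿ_k(2m) = 0 for every m ∈ {0,1,…,N}, then r_k = 0 for all k. -/

import Mathlib

open Finset Polynomial

/-- The binary Krawtchouk polynomial Kⁿ_k(m) = Σ_{m₁=0}^{m} (−1)^{m₁} C(m,m₁) C(n−m,k−m₁),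
with out-of-range binomial coefficients equal to zero. -/
def Kraw (n k m : ℕ) : ℤ :=
  ∑ m₁ ∈ Finset.range (m + 1),
    (-1) ^ m₁ * (Nat.choose m m₁ : ℤ) *
      (if m₁ ≤ k then (Nat.choose (n - m) (k - m₁) : ℤ) else 0)

/-!
STATEMENT 15: Uniqueness of the Krawtchouk linear system for odd n, N = (n−1)/2:
(i) Σ_{k=0}^{N} q_k Kⁿ_k(2m) = δ_{m,0} for all 0 ≤ m ≤ N forces q_k = 1/2^{n−1};
(ii) Σ_{k=0}^{N} r_k Kⁿ_k(2m) = 0 for all 0 ≤ m ≤ N forces r_k = 0.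
-/
lemma kraw_eq (n k m : ℕ) :
    Kraw n k m = ∑ j ∈ Finset.range (k+1),
      (-1)^j * (Nat.choose m j : ℤ) * (Nat.choose (n-m) (k-j) : ℤ) := by
  unfold Kraw
  have h1 : ∑ j ∈ Finset.range (m+1),
      ((-1)^j * (Nat.choose m j : ℤ) * (if j ≤ k then (Nat.choose (n-m) (k-j) : ℤ) else 0))
      = ∑ j ∈ Finset.range (m+k+1),
      ((-1)^j * (Nat.choose m j : ℤ) * (if j ≤ k then (Nat.choose (n-m) (k-j) : ℤ) else 0)) := by
    apply Finset.sum_subset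
    · apply Finset.range_subset_range.mpr; omega
    · intro x hx hx'
      simp only [Finset.mem_range] at hx hx'
      rw [Nat.choose_eq_zero_of_lt (by omega)]
      simp
  have h2 : ∑ j ∈ Finset.range (k+1),
      ((-1)^j * (Nat.choose m j : ℤ) * (if j ≤ k then (Nat.choose (n-m) (k-j) : ℤ) else 0))
      = ∑ j ∈ Finset.range (m+k+1),
      ((-1)^j * (Nat.choose m j : ℤ) * (if j ≤ k then (Nat.choose (n-m) (k-j) : ℤ) else 0)) := by
    apply Finset.sum_subset
    · apply Finset.range_subset_range.mpr; omega
    · intro x hx hx'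
      simp only [Finset.mem_range] at hx hx'
      rw [if_neg (by omega)]
      ring
  rw [h1, ← h2]
  apply Finset.sum_congr rfl
  intro j hj
  rw [if_pos (by simp at hj; omega)]

lemma kraw_symm (n k m : ℕ) (hm : m ≤ n) (hk : k ≤ n) (hme : Even m) :
    Kraw n (n - k) m = Kraw n k m := by
  unfold Kraw
  rw [← Finset.sum_range_reflect]
  apply Finset.sum_congr rfl
  intro j hj
  simp only [Finset.mem_range] at hj
  have hjm : j ≤ m := by omega
  have hidx : m + 1 - 1 - j = m - j := by omega
  rw [hidx]
  have hme' : m % 2 = 0 := Nat.even_iff.mp hme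
  have hsign : ((-1 : ℤ))^(m - j) = (-1)^j := by
    rcases Nat.even_or_odd j with he | ho
    · rw [he.neg_one_pow, (Nat.even_iff.mpr (by have := Nat.even_iff.mp he; omega) :
        Even (m - j)).neg_one_pow]
    · rw [ho.neg_one_pow, (Nat.odd_iff.mpr (by have := Nat.odd_iff.mp ho; omega) :
        Odd (m - j)).neg_one_pow]
  rw [hsign, Nat.choose_symm hjm]
  congr 1
  by_cases h1 : j ≤ k
  · by_cases h2 : k - j ≤ n - m
    · rw [if_pos (by omega), if_pos h1]
      rw [show (n - k) - (m - j) = (n - m) - (k - j) by omega, Nat.choose_symm h2]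
    · rw [if_neg (by omega), if_pos h1, Nat.choose_eq_zero_of_lt (by omega)]
      simp
  · rw [if_neg h1]
    by_cases h3 : m - j ≤ n - k
    · rw [if_pos h3, Nat.choose_eq_zero_of_lt (by omega)]
      simp
    · rw [if_neg h3]

lemma kraw_fullsum (n m : ℕ) (hm : m ≤ n) :
    ∑ k ∈ Finset.range (n+1), Kraw n k m = if m = 0 then 2^n else 0 := by
  unfold Kraw
  rw [Finset.sum_comm]
  have inner : ∀ j ∈ Finset.range (m+1),
      ∑ k ∈ Finset.range (n+1),
        ((-1)^j * (Nat.choose m j : ℤ) * (if j ≤ k then (Nat.choose (n-m) (k-j) : ℤ) else 0))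
      = (-1)^j * (Nat.choose m j : ℤ) * 2^(n-m) := by
    intro j hj
    simp only [Finset.mem_range] at hj
    have hjn : j ≤ n := by omega
    rw [← Finset.mul_sum]
    congr 1
    have e1 : ∑ k ∈ Finset.range (n+1), (if j ≤ k then (Nat.choose (n-m) (k-j) : ℤ) else 0)
        = ∑ k ∈ Finset.Ico j (n+1), (if j ≤ k then (Nat.choose (n-m) (k-j) : ℤ) else 0) := by
      symm
      apply Finset.sum_subset
      · intro x hx; simp only [Finset.mem_Ico] at hx; simp only [Finset.mem_range]; omega
      · intro x hx hx'
        simp only [Finset.mem_range] at hx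
        simp only [Finset.mem_Ico] at hx'
        rw [if_neg (by omega)]
    rw [e1, Finset.sum_congr rfl (fun x hx => by
      simp only [Finset.mem_Ico] at hx
      rw [if_pos hx.1]), Finset.sum_Ico_eq_sum_range]
    simp only [Nat.add_sub_cancel_left]
    have e2 : ∑ t ∈ Finset.range (n+1-j), (Nat.choose (n-m) t : ℤ)
        = ∑ t ∈ Finset.range (n-m+1), (Nat.choose (n-m) t : ℤ) := by
      symm
      apply Finset.sum_subset
      · apply Finset.range_subset_range.mpr; omega
      · intro x hx hx'
        simp only [Finset.mem_range] at hx hx'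
        rw [Nat.choose_eq_zero_of_lt (by omega)]
        simp
    rw [e2]
    rw [← Nat.cast_sum]
    rw [Nat.sum_range_choose]
    push_cast
    ring
  rw [Finset.sum_congr rfl inner]
  have : ∑ j ∈ Finset.range (m+1), ((-1)^j * (Nat.choose m j : ℤ) * 2^(n-m))
      = (∑ j ∈ Finset.range (m+1), ((-1)^j * (Nat.choose m j : ℤ))) * 2^(n-m) := by
    rw [Finset.sum_mul]
  rw [this, Int.alternating_sum_range_choose]
  by_cases h : m = 0
  · simp [h]
  · simp [h]


lemma kraw_halfsum (N m : ℕ) (hm : m ≤ N) :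
    ∑ k ∈ Finset.range (N+1), Kraw (2*N+1) k (2*m) = if m = 0 then 2^(2*N) else 0 := by
  set n := 2*N+1 with hn
  have h2m : 2*m ≤ n := by omega
  have hfull := kraw_fullsum n (2*m) h2m
  have hsplit : ∑ k ∈ Finset.range (n+1), Kraw n k (2*m)
      = ∑ k ∈ Finset.range (N+1), Kraw n k (2*m)
        + ∑ k ∈ Finset.Ico (N+1) (n+1), Kraw n k (2*m) := by
    simp only [Finset.range_eq_Ico]
    rw [Finset.sum_Ico_consecutive _ (by omega : 0 ≤ N+1) (by omega)]
  have hsecond : ∑ k ∈ Finset.Ico (N+1) (n+1), Kraw n k (2*m)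
      = ∑ k ∈ Finset.range (N+1), Kraw n k (2*m) := by
    rw [Finset.sum_Ico_eq_sum_range]
    have : ∀ t ∈ Finset.range (n+1-(N+1)), Kraw n (N+1+t) (2*m) = Kraw n (N-t) (2*m) := by
      intro t ht
      simp only [Finset.mem_range] at ht
      have h1 : N - t = n - (N+1+t) := by omega
      rw [h1, kraw_symm n (N+1+t) (2*m) h2m (by omega) (even_two_mul m)]
    rw [Finset.sum_congr rfl this]
    have hrange : n + 1 - (N+1) = N + 1 := by omega
    rw [hrange]
    have hrefl := Finset.sum_range_reflect (fun k => Kraw n k (2*m)) (N+1)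
    simp only [Nat.add_sub_cancel] at hrefl
    exact hrefl
  rw [hsplit, hsecond] at hfull
  have h2 : (2:ℤ) * ∑ k ∈ Finset.range (N+1), Kraw n k (2*m) = if 2*m = 0 then 2^n else 0 := by
    rw [← hfull]; ring
  by_cases h : m = 0
  · subst h
    rw [if_pos rfl]
    rw [if_pos (by norm_num)] at h2
    have he : (2:ℤ)^n = 2 * 2^(2*N) := by rw [hn]; ring
    rw [he] at h2
    linarith
  · rw [if_neg (by omega)] at h2
    rw [if_neg h]
    linarith

noncomputable def krawPoly (n k : ℕ) : Polynomial ℝ :=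
  ∑ j ∈ Finset.range (k+1),
    Polynomial.C ((-1)^j / (j.factorial * (k-j).factorial) : ℝ) *
      (descPochhammer ℝ j * (descPochhammer ℝ (k-j)).comp (Polynomial.C (n:ℝ) - Polynomial.X))

lemma krawPoly_eval (n k m : ℕ) (hm : m ≤ n) :
    (krawPoly n k).eval (m : ℝ) = (Kraw n k m : ℝ) := by
  rw [kraw_eq, krawPoly, Polynomial.eval_finset_sum]
  push_cast
  apply Finset.sum_congr rfl
  intro j hj
  rw [Polynomial.eval_mul, Polynomial.eval_C, Polynomial.eval_mul, Polynomial.eval_comp,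
    Polynomial.eval_sub, Polynomial.eval_C, Polynomial.eval_X,
    show (n : ℝ) - (m : ℝ) = ((n - m : ℕ) : ℝ) by rw [Nat.cast_sub hm],
    descPochhammer_eval_eq_descFactorial, descPochhammer_eval_eq_descFactorial,
    Nat.descFactorial_eq_factorial_mul_choose, Nat.descFactorial_eq_factorial_mul_choose]
  have h1 : (j.factorial : ℝ) ≠ 0 := Nat.cast_ne_zero.mpr (Nat.factorial_ne_zero j)
  have h2 : ((k-j).factorial : ℝ) ≠ 0 := Nat.cast_ne_zero.mpr (Nat.factorial_ne_zero (k-j))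
  push_cast
  field_simp

lemma natDegree_CsubX (n : ℕ) : (Polynomial.C (n:ℝ) - Polynomial.X).natDegree = 1 := by
  rw [show Polynomial.C (n:ℝ) - Polynomial.X = -(Polynomial.X - Polynomial.C (n:ℝ)) by ring,
    Polynomial.natDegree_neg, Polynomial.natDegree_X_sub_C]

lemma leadingCoeff_CsubX (n : ℕ) : (Polynomial.C (n:ℝ) - Polynomial.X).leadingCoeff = -1 := by
  rw [show Polynomial.C (n:ℝ) - Polynomial.X = -(Polynomial.X - Polynomial.C (n:ℝ)) by ring,
    Polynomial.leadingCoeff_neg, (monic_X_sub_C ((n:ℝ))).leadingCoeff]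

lemma krawPoly_natDegree_le (n k : ℕ) : (krawPoly n k).natDegree ≤ k := by
  apply Polynomial.natDegree_sum_le_of_forall_le
  intro j hj
  simp only [Finset.mem_range] at hj
  apply le_trans (Polynomial.natDegree_mul_le)
  rw [Polynomial.natDegree_C]
  apply le_trans (by exact le_of_eq (zero_add _))
  apply le_trans (Polynomial.natDegree_mul_le)
  rw [descPochhammer_natDegree, Polynomial.natDegree_comp, descPochhammer_natDegree,
    natDegree_CsubX]
  omega

lemma krawPoly_coeff_ne (n k : ℕ) : (krawPoly n k).coeff k ≠ 0 := by
  have hterm : ∀ j ∈ Finset.range (k+1),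
      (Polynomial.C ((-1)^j / (j.factorial * (k-j).factorial) : ℝ) *
        (descPochhammer ℝ j * (descPochhammer ℝ (k-j)).comp
          (Polynomial.C (n:ℝ) - Polynomial.X))).coeff k
      = (-1)^k / (j.factorial * (k-j).factorial) := by
    intro j hj
    simp only [Finset.mem_range] at hj
    rw [Polynomial.coeff_C_mul]
    have hA : (descPochhammer ℝ j).natDegree = j := by rw [descPochhammer_natDegree]
    have hB : ((descPochhammer ℝ (k-j)).comp
        (Polynomial.C (n:ℝ) - Polynomial.X)).natDegree = k - j := by
      rw [Polynomial.natDegree_comp, descPochhammer_natDegree, natDegree_CsubX, mul_one]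
    have hcoef := Polynomial.coeff_mul_degree_add_degree (descPochhammer ℝ j)
      ((descPochhammer ℝ (k-j)).comp (Polynomial.C (n:ℝ) - Polynomial.X))
    rw [hA, hB, show j + (k-j) = k by omega,
      (monic_descPochhammer ℝ j).leadingCoeff,
      Polynomial.leadingCoeff_comp (by rw [natDegree_CsubX]; omega),
      (monic_descPochhammer ℝ (k-j)).leadingCoeff, leadingCoeff_CsubX,
      descPochhammer_natDegree] at hcoef
    rw [hcoef]
    have hsg : ((-1:ℝ))^j * (-1)^(k-j) = (-1)^k := by
      rw [← pow_add]
      congr 1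
      omega
    field_simp
    exact hsg
  rw [krawPoly, Polynomial.finset_sum_coeff, Finset.sum_congr rfl hterm]
  have hpos : 0 < ∑ j ∈ Finset.range (k+1), (1 / (j.factorial * (k-j).factorial) : ℝ) := by
    apply Finset.sum_pos
    · intro j hj
      have h1 : (0:ℝ) < j.factorial := by exact_mod_cast Nat.factorial_pos j
      have h2 : (0:ℝ) < (k-j).factorial := by exact_mod_cast Nat.factorial_pos (k-j)
      positivity
    · exact ⟨0, by simp⟩
  have : ∑ j ∈ Finset.range (k+1), ((-1:ℝ)^k / (j.factorial * (k-j).factorial))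
      = (-1)^k * ∑ j ∈ Finset.range (k+1), (1 / (j.factorial * (k-j).factorial) : ℝ) := by
    rw [Finset.mul_sum]
    apply Finset.sum_congr rfl
    intro j hj
    ring
  rw [this]
  exact mul_ne_zero (pow_ne_zero _ (by norm_num)) hpos.ne'

theorem stmt15 (n : ℕ) (hn : 1 ≤ n) (hodd : Odd n) :
    (∀ q : ℕ → ℝ,
      (∀ m ≤ (n - 1) / 2,
        ∑ k ∈ Finset.range ((n - 1) / 2 + 1), q k * (Kraw n k (2 * m) : ℝ)
          = if m = 0 then 1 else 0) →
      ∀ k ≤ (n - 1) / 2, q k = 1 / 2 ^ (n - 1)) ∧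
    (∀ r : ℕ → ℝ,
      (∀ m ≤ (n - 1) / 2,
        ∑ k ∈ Finset.range ((n - 1) / 2 + 1), r k * (Kraw n k (2 * m) : ℝ) = 0) →
      ∀ k ≤ (n - 1) / 2, r k = 0) := by
  obtain ⟨N, hN⟩ := hodd
  have hN2 : (n - 1) / 2 = N := by omega
  simp only [hN2]
  have key : ∀ r : ℕ → ℝ,
      (∀ m ≤ N, ∑ k ∈ Finset.range (N + 1), r k * (Kraw n k (2 * m) : ℝ) = 0) →
      ∀ k ≤ N, r k = 0 := by
    intro r hr
    set f : Polynomial ℝ := ∑ k ∈ Finset.range (N+1), Polynomial.C (r k) * krawPoly n k with hf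
    have hdeg : f.natDegree ≤ N := by
      apply Polynomial.natDegree_sum_le_of_forall_le
      intro k hk
      simp only [Finset.mem_range] at hk
      apply le_trans Polynomial.natDegree_mul_le
      rw [Polynomial.natDegree_C]
      have := krawPoly_natDegree_le n k
      omega
    have heval : ∀ m : ℕ, m ≤ N → f.eval ((2*m : ℕ) : ℝ) = 0 := by
      intro m hm
      rw [hf, Polynomial.eval_finset_sum]
      rw [Finset.sum_congr rfl (fun k _ => by
        rw [Polynomial.eval_mul, Polynomial.eval_C, krawPoly_eval n k (2*m) (by omega)])]
      exact hr m hm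
    have hf0 : f = 0 := by
      apply Polynomial.eq_zero_of_natDegree_lt_card_of_eval_eq_zero f
        (f := fun i : Fin (N+1) => ((2*(i:ℕ) : ℕ) : ℝ))
      · intro i j hij
        have : 2*(i:ℕ) = 2*(j:ℕ) := Nat.cast_injective hij
        exact Fin.ext (by omega)
      · intro i
        exact heval i (by omega)
      · rw [Fintype.card_fin]
        omega
    have hco : ∀ k, k ≤ N → (∀ j, k < j → j ≤ N → r j = 0) → r k = 0 := by
      intro k hk hup
      have h0 : f.coeff k = 0 := by rw [hf0]; simp
      rw [hf, Polynomial.finset_sum_coeff] at h0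
      rw [Finset.sum_congr rfl (fun j _ => Polynomial.coeff_C_mul (krawPoly n j))] at h0
      rw [Finset.sum_eq_single_of_mem k (Finset.mem_range.mpr (by omega))
        (fun j hj hne => by
          simp only [Finset.mem_range] at hj
          rcases lt_or_gt_of_ne hne with hlt | hgt
          · rw [Polynomial.coeff_eq_zero_of_natDegree_lt
              (lt_of_le_of_lt (krawPoly_natDegree_le n j) hlt), mul_zero]
          · rw [hup j hgt (by omega), zero_mul])] at h0
      exact (mul_eq_zero.mp h0).resolve_right (krawPoly_coeff_ne n k)
    have hind : ∀ d k, k ≤ N → N - k ≤ d → r k = 0 := by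
      intro d
      induction d with
      | zero => intro k hk h0; exact hco k hk (fun j hj hjN => (by omega : False).elim)
      | succ d ih => intro k hk hd; exact hco k hk (fun j hj hjN => ih j hjN (by omega))
    intro k hk
    exact hind N k hk (by omega)
  constructor
  · intro q hq k hk
    have hsum : ∀ m ≤ N, ∑ k ∈ Finset.range (N + 1), (Kraw n k (2 * m) : ℝ)
        = if m = 0 then 2^(n-1) else 0 := by
      intro m hm
      have := kraw_halfsum N m hm
      rw [← hN] at this
      have hcast : ∑ k ∈ Finset.range (N+1), (Kraw n k (2*m) : ℝ)
          = ((∑ k ∈ Finset.range (N+1), Kraw n k (2*m) : ℤ) : ℝ) := by push_cast; rfl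
      rw [hcast, this, show 2*N = n - 1 by omega]
      by_cases h : m = 0 <;> simp [h]
    have hzero : ∀ m ≤ N, ∑ j ∈ Finset.range (N + 1),
        (q j - 1 / 2 ^ (n-1)) * (Kraw n j (2 * m) : ℝ) = 0 := by
      intro m hm
      have e : ∑ j ∈ Finset.range (N + 1), (q j - 1 / 2 ^ (n-1)) * (Kraw n j (2 * m) : ℝ)
          = (∑ j ∈ Finset.range (N + 1), q j * (Kraw n j (2 * m) : ℝ))
            - (1 / 2 ^ (n-1)) * ∑ j ∈ Finset.range (N + 1), (Kraw n j (2 * m) : ℝ) := by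
        rw [Finset.mul_sum, ← Finset.sum_sub_distrib]
        apply Finset.sum_congr rfl
        intro j hj
        ring
      rw [e, hq m hm, hsum m hm]
      by_cases h : m = 0
      · simp only [h, if_pos rfl]
        field_simp
        simp
      · simp [h]
    have := key (fun j => q j - 1 / 2 ^ (n-1)) hzero k hk
    have h2 : q k - 1 / 2 ^ (n-1) = 0 := this
    linarith
  · exact key
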